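/- The triple series ∑_{n₁=1}^∞ ∑_{n₂=1}^∞ ∑_{n₃=1}^∞ (n₁·n₂·n₃)/(n₁+n₂+n₃)! equals (31/120)·e. -/

import Mathlib

open Finset



noncomputable def F (c : ℕ) : ℝ := ∑' k : ℕ, 1 / ((k + c).factorial : ℝ)

lemma sumInvFact : Summable (fun n : ℕ => 1 / (n.factorial : ℝ)) := by
  simpa using Real.summable_pow_div_factorial 1

lemma sumF (c : ℕ) : Summable (fun k : ℕ => 1 / (((k + c).factorial : ℝ))) :=
  sumInvFact.comp_injective (add_left_injective c)

lemma F_zero : F 0 = Real.exp 1 := by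
  rw [Real.exp_eq_exp_ℝ, NormedSpace.exp_eq_tsum_div]
  simp [F]

lemma F_succ (c : ℕ) : F (c + 1) = F c - 1 / (c.factorial : ℝ) := by
  have h0 : F c = 1 / ((0 + c).factorial : ℝ) + ∑' k : ℕ, 1 / (((k + 1 + c).factorial : ℝ)) := by
    simp only [F]; exact Summable.tsum_eq_zero_add (sumF c)
  have h2 : F (c + 1) = ∑' k : ℕ, (1:ℝ) / ((k + 1 + c).factorial) := by
    simp only [F]
    exact tsum_congr fun k => by rw [show k + (c+1) = k + 1 + c by omega]
  rw [h2]
  rw [zero_add] at h0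
  linarith

lemma F_one : F 1 = Real.exp 1 - 1 := by
  have := F_succ 0; rw [F_zero] at this; simpa using this

lemma F_two : F 2 = Real.exp 1 - 2 := by
  have := F_succ 1; rw [F_one] at this; norm_num [Nat.factorial] at this; linarith

lemma F_nonneg (c : ℕ) : 0 ≤ F c := tsum_nonneg fun k => by positivity



lemma myGL (m : ℕ) (c : ℕ → ℝ) (hc : ∀ k, 0 ≤ c k) (C : ℕ → ℝ)
    (hC : ∀ l, ∑ k ∈ range (l+1), c k = C l)
    (hsum : Summable fun l : ℕ => C l / ((l + m).factorial : ℝ)) :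
    Summable (fun k : ℕ => c k * F (k + m)) ∧
      ∑' k : ℕ, c k * F (k + m) = ∑' l : ℕ, C l / ((l + m).factorial : ℝ) := by
  set h : ℕ × ℕ → ℝ := fun p => if p.2 ≤ p.1 then c p.2 / ((p.1 + m).factorial : ℝ) else 0 with hh
  have hnn : 0 ≤ h := by
    intro p; by_cases hp : p.2 ≤ p.1 <;> simp [hh, hp]
    exact div_nonneg (hc _) (by positivity)
  have hfib : ∀ l, Summable fun k => h (l, k) := by
    intro l
    apply summable_of_ne_finset_zero (s := range (l+1))
    intro k hk
    simp only [mem_range] at hk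
    have : ¬ k ≤ l := by omega
    simp [hh, this]
  have hfibval : ∀ l : ℕ, ∑' k, h (l, k) = C l / ((l + m).factorial : ℝ) := by
    intro l
    rw [tsum_eq_sum (s := range (l+1)) (by
      intro k hk
      simp only [mem_range] at hk
      have : ¬ k ≤ l := by omega
      simp [hh, this])]
    rw [← hC l, Finset.sum_div]
    apply Finset.sum_congr rfl
    intro k hk
    simp only [mem_range] at hk
    have : k ≤ l := by omega
    simp [hh, this]
  have hsumh : Summable h := by
    rw [summable_prod_of_nonneg hnn]
    refine ⟨hfib, ?_⟩
    apply hsum.congr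
    intro l; exact (hfibval l).symm
  have hcol : ∀ k : ℕ, ∑' l, h (l, k) = c k * F (k + m) := by
    intro k
    have hinj : Function.Injective (fun j : ℕ => j + k) := add_left_injective k
    have hsupp : ∀ x ∉ Set.range (fun j : ℕ => j + k), h (x, k) = 0 := by
      intro x hx
      have : ¬ k ≤ x := by
        intro hle
        exact hx ⟨x - k, by show x - k + k = x; omega⟩
      simp [hh, this]
    rw [← hinj.tsum_eq ((Function.support_subset_iff' (f := fun x => h (x, k))).mpr hsupp)]
    have : ∀ j : ℕ, h (j + k, k) = c k * (1 / ((j + (k + m)).factorial : ℝ)) := by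
      intro j
      have : k ≤ j + k := by omega
      simp only [hh, if_pos this]
      rw [show j + k + m = j + (k + m) by omega]
      ring
    rw [tsum_congr this, tsum_mul_left]
    rfl
  have hsumswap : Summable (fun q : ℕ × ℕ => h (q.2, q.1)) := by
    have := (Equiv.prodComm ℕ ℕ).summable_iff.mpr hsumh
    exact this.congr (fun q => rfl)
  have hmarg : Summable (fun k : ℕ => c k * F (k + m)) := by
    have := ((summable_prod_of_nonneg (fun p => hnn (p.2, p.1))).mp hsumswap).2
    exact this.congr hcol
  refine ⟨hmarg, ?_⟩
  calc ∑' k : ℕ, c k * F (k + m) = ∑' k : ℕ, ∑' l : ℕ, h (l, k) := by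
        exact tsum_congr fun k => (hcol k).symm
    _ = ∑' l : ℕ, ∑' k : ℕ, h (l, k) :=
        Summable.tsum_comm (f := fun l k => h (l, k)) hsumh
    _ = ∑' l : ℕ, C l / ((l + m).factorial : ℝ) := tsum_congr hfibval

lemma antidQ (t : ℕ) : ∑ p ∈ antidiagonal t, ((p.2 : ℝ) + 1) = ((t:ℝ)+1)*((t:ℝ)+2)/2 := by
  induction t with
  | zero => norm_num [Finset.Nat.antidiagonal_zero]
  | succ n ih =>
    rw [Finset.Nat.sum_antidiagonal_succ]
    simp only []
    rw [ih]
    push_cast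
    ring

lemma antidP (t : ℕ) : ∑ p ∈ antidiagonal t, ((p.1 : ℝ) + 1) * ((p.2 : ℝ) + 1)
    = ((t:ℝ)+1)*((t:ℝ)+2)*((t:ℝ)+3)/6 := by
  induction t with
  | zero => norm_num [Finset.Nat.antidiagonal_zero]
  | succ n ih =>
    rw [Finset.Nat.sum_antidiagonal_succ]
    simp only []
    have : ∑ p ∈ antidiagonal n, ((p.1 : ℝ) + 1 + 1) * ((p.2 : ℝ) + 1)
        = ∑ p ∈ antidiagonal n, (((p.1 : ℝ) + 1) * ((p.2 : ℝ) + 1) + ((p.2 : ℝ) + 1)) := by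
      apply Finset.sum_congr rfl; intro p _; ring
    push_cast
    rw [this, Finset.sum_add_distrib, ih, antidQ]
    ring

lemma myGPair (g : ℕ → ℝ) (hg : ∀ t, 0 ≤ g t)
    (hsum : Summable fun t : ℕ => ((t:ℝ)+1)*((t:ℝ)+2)*((t:ℝ)+3)/6 * g t) :
    Summable (fun p : ℕ × ℕ => ((p.1:ℝ)+1) * ((p.2:ℝ)+1) * g (p.1 + p.2)) ∧
    ∑' p : ℕ × ℕ, ((p.1:ℝ)+1) * ((p.2:ℝ)+1) * g (p.1 + p.2)
      = ∑' t : ℕ, ((t:ℝ)+1)*((t:ℝ)+2)*((t:ℝ)+3)/6 * g t := by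
  set f : (Σ n : ℕ, antidiagonal n) → ℝ :=
    fun x => ((x.2.1.1:ℝ)+1) * ((x.2.1.2:ℝ)+1) * g (x.2.1.1 + x.2.1.2) with hf
  have hnn : ∀ x, 0 ≤ f x := fun x => by
    apply mul_nonneg (by positivity) (hg _)
  have hfibval : ∀ n : ℕ, ∑' p : antidiagonal n, f ⟨n, p⟩
      = ((n:ℝ)+1)*((n:ℝ)+2)*((n:ℝ)+3)/6 * g n := by
    intro n
    rw [Finset.tsum_subtype (antidiagonal n)
      (fun p => ((p.1:ℝ)+1) * ((p.2:ℝ)+1) * g (p.1 + p.2))]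
    rw [show (∑ p ∈ antidiagonal n, ((p.1:ℝ)+1) * ((p.2:ℝ)+1) * g (p.1 + p.2))
        = ∑ p ∈ antidiagonal n, ((p.1:ℝ)+1) * ((p.2:ℝ)+1) * g n from
      Finset.sum_congr rfl fun p hp => by rw [Finset.HasAntidiagonal.mem_antidiagonal.mp hp]]
    rw [← Finset.sum_mul, antidP]
  have hsumf : Summable f := by
    rw [summable_sigma_of_nonneg hnn]
    constructor
    · intro n; exact Summable.of_finite
    · exact hsum.congr fun n => (hfibval n).symm
  have hequiv := (Finset.HasAntidiagonal.sigmaAntidiagonalEquivProd (A := ℕ)).summable_iff (f :=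
    fun p : ℕ × ℕ => ((p.1:ℝ)+1) * ((p.2:ℝ)+1) * g (p.1 + p.2))
  have hcomp : (fun p : ℕ × ℕ => ((p.1:ℝ)+1) * ((p.2:ℝ)+1) * g (p.1 + p.2)) ∘
      (Finset.HasAntidiagonal.sigmaAntidiagonalEquivProd (A := ℕ)) = f := by
    funext x; rfl
  have hsump : Summable (fun p : ℕ × ℕ => ((p.1:ℝ)+1) * ((p.2:ℝ)+1) * g (p.1 + p.2)) := by
    rw [← hequiv, hcomp]; exact hsumf
  refine ⟨hsump, ?_⟩
  rw [← (Finset.HasAntidiagonal.sigmaAntidiagonalEquivProd (A := ℕ)).tsum_eq]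
  have : ∑' x : (Σ n : ℕ, antidiagonal n),
      (fun p : ℕ × ℕ => ((p.1:ℝ)+1) * ((p.2:ℝ)+1) * g (p.1 + p.2))
        ((Finset.HasAntidiagonal.sigmaAntidiagonalEquivProd (A := ℕ)) x) = ∑' x, f x := by
    rw [← hcomp]; rfl
  rw [this, Summable.tsum_sigma hsumf]
  exact tsum_congr hfibval



noncomputable def A (m : ℕ) : ℝ := F m - m * F (m + 1)

lemma factE (n : ℕ) : ((n + 1).factorial : ℝ) = ((n:ℝ) + 1) * (n.factorial : ℝ) := by
  push_cast [Nat.factorial_succ]; ring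

lemma factNZ (n : ℕ) : (n.factorial : ℝ) ≠ 0 :=
  Nat.cast_ne_zero.mpr (Nat.factorial_ne_zero _)

lemma Apoint (m k : ℕ) : ((k:ℝ) + 1) / (((m + k + 1).factorial : ℝ))
    = 1 / (((k + m).factorial : ℝ)) - (m:ℝ) * (1 / (((k + (m + 1)).factorial : ℝ))) := by
  have e2 : k + (m + 1) = m + k + 1 := by omega
  have e1 : (((m + k + 1).factorial : ℝ)) = ((m:ℝ) + k + 1) * ((k + m).factorial : ℝ) := by
    rw [show m + k + 1 = (k + m) + 1 by omega, factE]; push_cast; ring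
  rw [e2, e1]
  have h1 := factNZ (k + m)
  have h2 : ((m:ℝ) + k + 1) ≠ 0 := by positivity
  field_simp
  ring

lemma sumA (m : ℕ) : Summable (fun k : ℕ => ((k:ℝ) + 1) / (((m + k + 1).factorial : ℝ))) := by
  apply Summable.congr ((sumF m).sub ((sumF (m + 1)).mul_left (m:ℝ)))
  intro k
  exact (Apoint m k).symm

lemma tsumA (m : ℕ) : ∑' k : ℕ, ((k:ℝ) + 1) / (((m + k + 1).factorial : ℝ)) = A m := by
  rw [tsum_congr (Apoint m)]
  rw [Summable.tsum_sub (sumF m) ((sumF (m + 1)).mul_left (m:ℝ)), tsum_mul_left]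
  rfl

lemma A_nonneg (m : ℕ) : 0 ≤ A m := by
  rw [← tsumA m]
  exact tsum_nonneg fun k => by positivity

-- partial sum identities
lemma hCU : ∀ l : ℕ, ∑ k ∈ range (l + 1), ((k:ℝ)+1)*((k:ℝ)+2)*((k:ℝ)+3)/6
    = ((l:ℝ)+1)*((l:ℝ)+2)*((l:ℝ)+3)*((l:ℝ)+4)/24 := by
  intro l
  induction l with
  | zero => norm_num
  | succ n ih => rw [Finset.sum_range_succ, ih]; push_cast; ring

lemma hCV : ∀ l : ℕ, ∑ k ∈ range (l + 1), ((k:ℝ)+1)*((k:ℝ)+2)*((k:ℝ)+3)/6*((k:ℝ)+2)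
    = ((l:ℝ)+1)*((l:ℝ)+2)*((l:ℝ)+3)*((l:ℝ)+4)*(2*(l:ℝ)+5)/60 := by
  intro l
  induction l with
  | zero => norm_num
  | succ n ih => rw [Finset.sum_range_succ, ih]; push_cast; ring

lemma fact2E (l : ℕ) : (((l+2).factorial : ℝ)) = ((l:ℝ)+2)*((l:ℝ)+1)*(l.factorial : ℝ) := by
  rw [show l+2 = (l+1)+1 from rfl, factE, factE]; push_cast; ring

lemma fact3E (l : ℕ) : (((l+3).factorial : ℝ)) = ((l:ℝ)+3)*((l:ℝ)+2)*((l:ℝ)+1)*(l.factorial : ℝ) := by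
  rw [show l+3 = (l+2)+1 from rfl, factE, fact2E]; push_cast; ring

lemma fact4E (l : ℕ) : (((l+4).factorial : ℝ)) = ((l:ℝ)+4)*((l:ℝ)+3)*((l:ℝ)+2)*((l:ℝ)+1)*(l.factorial : ℝ) := by
  rw [show l+4 = (l+3)+1 from rfl, factE, fact3E]; push_cast; ring

lemma fact5E (l : ℕ) : (((l+5).factorial : ℝ)) = ((l:ℝ)+5)*((l:ℝ)+4)*((l:ℝ)+3)*((l:ℝ)+2)*((l:ℝ)+1)*(l.factorial : ℝ) := by
  rw [show l+5 = (l+4)+1 from rfl, factE, fact4E]; push_cast; ring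

lemma pU (l : ℕ) : (((l:ℝ)+3)*((l:ℝ)+4)*((l:ℝ)+5)*((l:ℝ)+6)/24) / (((l+4).factorial : ℝ))
    = (1/24) * (1/(l.factorial : ℝ)) + ((1/3) * (1/(((l+1).factorial : ℝ)))
      + (1/2) * (1/(((l+2).factorial : ℝ)))) := by
  rw [fact4E, fact2E, factE]
  have h1 := factNZ l
  have h2 : ((l:ℝ)+1) ≠ 0 := by positivity
  have h3 : ((l:ℝ)+2) ≠ 0 := by positivity
  have h4 : ((l:ℝ)+3) ≠ 0 := by positivity
  have h5 : ((l:ℝ)+4) ≠ 0 := by positivity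
  field_simp
  ring

lemma pV (l : ℕ) : (((l:ℝ)+3)*((l:ℝ)+4)*((l:ℝ)+5)*((l:ℝ)+6)*(2*(l:ℝ)+9)/60) / (((l+5).factorial : ℝ))
    = (1/30) * (1/(l.factorial : ℝ)) + ((1/4) * (1/(((l+1).factorial : ℝ)))
      + (1/3) * (1/(((l+2).factorial : ℝ)))) := by
  rw [fact5E, fact2E, factE]
  have h1 := factNZ l
  have h2 : ((l:ℝ)+1) ≠ 0 := by positivity
  have h3 : ((l:ℝ)+2) ≠ 0 := by positivity
  have h4 : ((l:ℝ)+3) ≠ 0 := by positivity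
  have h5 : ((l:ℝ)+4) ≠ 0 := by positivity
  have h6 : ((l:ℝ)+5) ≠ 0 := by positivity
  field_simp
  ring

lemma sumTailU : Summable (fun l : ℕ =>
    (1/24) * (1/(l.factorial : ℝ)) + ((1/3) * (1/(((l+1).factorial : ℝ)))
      + (1/2) * (1/(((l+2).factorial : ℝ))))) :=
  (sumInvFact.mul_left _).add (((sumF 1).mul_left _).add ((sumF 2).mul_left _))

lemma sumTailV : Summable (fun l : ℕ =>
    (1/30) * (1/(l.factorial : ℝ)) + ((1/4) * (1/(((l+1).factorial : ℝ)))
      + (1/3) * (1/(((l+2).factorial : ℝ))))) :=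
  (sumInvFact.mul_left _).add (((sumF 1).mul_left _).add ((sumF 2).mul_left _))

lemma hsumU : Summable (fun l : ℕ =>
    (((l:ℝ)+1)*((l:ℝ)+2)*((l:ℝ)+3)*((l:ℝ)+4)/24) / (((l+2).factorial : ℝ))) := by
  rw [← summable_nat_add_iff 2]
  apply sumTailU.congr
  intro n
  rw [show n+2+2 = n+4 by omega, ← pU n]
  push_cast
  ring_nf

lemma hsumV : Summable (fun l : ℕ =>
    (((l:ℝ)+1)*((l:ℝ)+2)*((l:ℝ)+3)*((l:ℝ)+4)*(2*(l:ℝ)+5)/60) / (((l+3).factorial : ℝ))) := by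
  rw [← summable_nat_add_iff 2]
  apply sumTailV.congr
  intro n
  rw [show n+2+3 = n+5 by omega, ← pV n]
  push_cast
  ring_nf

lemma tsumInvFact0 : ∑' k : ℕ, 1 / ((k).factorial : ℝ) = F 0 := by
  simp [F]

lemma stripTwo (g : ℕ → ℝ) (hg : Summable g) :
    ∑' l : ℕ, g l = g 0 + (g 1 + ∑' l : ℕ, g (l + 2)) := by
  rw [Summable.tsum_eq_zero_add hg, Summable.tsum_eq_zero_add ((summable_nat_add_iff 1).mpr hg)]

lemma valueU : ∑' l : ℕ, (((l:ℝ)+1)*((l:ℝ)+2)*((l:ℝ)+3)*((l:ℝ)+4)/24) / (((l+2).factorial : ℝ))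
    = 7/8 * Real.exp 1 := by
  rw [stripTwo _ hsumU]
  have h2 : ∀ b : ℕ, ((((b+2:ℕ)):ℝ)+1)*((((b+2:ℕ)):ℝ)+2)*((((b+2:ℕ)):ℝ)+3)*((((b+2:ℕ)):ℝ)+4)/24 / (((b+2+2).factorial : ℝ))
      = (1/24) * (1/(b.factorial : ℝ)) + ((1/3) * (1/(((b+1).factorial : ℝ)))
      + (1/2) * (1/(((b+2).factorial : ℝ)))) := by
    intro b
    rw [show b+2+2 = b+4 by omega, ← pU b]
    push_cast
    ring
  rw [tsum_congr h2]
  rw [Summable.tsum_add (sumInvFact.mul_left _) (((sumF 1).mul_left _).add ((sumF 2).mul_left _)),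
      Summable.tsum_add ((sumF 1).mul_left _) ((sumF 2).mul_left _),
      tsum_mul_left, tsum_mul_left, tsum_mul_left, tsumInvFact0]
  have e1 : (∑' k : ℕ, 1 / (((k+1).factorial : ℝ))) = F 1 := rfl
  have e2 : (∑' k : ℕ, 1 / (((k+2).factorial : ℝ))) = F 2 := rfl
  rw [e1, e2, F_zero, F_one, F_two]
  norm_num [Nat.factorial]
  try ring
  try linarith

lemma valueV : ∑' l : ℕ, (((l:ℝ)+1)*((l:ℝ)+2)*((l:ℝ)+3)*((l:ℝ)+4)*(2*(l:ℝ)+5)/60) / (((l+3).factorial : ℝ))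
    = 37/60 * Real.exp 1 := by
  rw [stripTwo _ hsumV]
  have h2 : ∀ b : ℕ, ((((b+2:ℕ)):ℝ)+1)*((((b+2:ℕ)):ℝ)+2)*((((b+2:ℕ)):ℝ)+3)*((((b+2:ℕ)):ℝ)+4)*(2*(((b+2:ℕ)):ℝ)+5)/60 / (((b+2+3).factorial : ℝ))
      = (1/30) * (1/(b.factorial : ℝ)) + ((1/4) * (1/(((b+1).factorial : ℝ)))
      + (1/3) * (1/(((b+2).factorial : ℝ)))) := by
    intro b
    rw [show b+2+3 = b+5 by omega, ← pV b]
    push_cast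
    ring
  rw [tsum_congr h2]
  rw [Summable.tsum_add (sumInvFact.mul_left _) (((sumF 1).mul_left _).add ((sumF 2).mul_left _)),
      Summable.tsum_add ((sumF 1).mul_left _) ((sumF 2).mul_left _),
      tsum_mul_left, tsum_mul_left, tsum_mul_left, tsumInvFact0]
  have e1 : (∑' k : ℕ, 1 / (((k+1).factorial : ℝ))) = F 1 := rfl
  have e2 : (∑' k : ℕ, 1 / (((k+2).factorial : ℝ))) = F 2 := rfl
  rw [e1, e2, F_zero, F_one, F_two]
  norm_num [Nat.factorial]
  try ring
  try linarith

lemma valueT :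
    Summable (fun t : ℕ => (((t:ℝ)+1)*((t:ℝ)+2)*((t:ℝ)+3)/6) * A (t+2)) ∧
    ∑' t : ℕ, (((t:ℝ)+1)*((t:ℝ)+2)*((t:ℝ)+3)/6) * A (t+2) = 31/120 * Real.exp 1 := by
  have hu : ∀ k : ℕ, 0 ≤ ((k:ℝ)+1)*((k:ℝ)+2)*((k:ℝ)+3)/6 := fun k => by positivity
  have hv : ∀ k : ℕ, 0 ≤ ((k:ℝ)+1)*((k:ℝ)+2)*((k:ℝ)+3)/6*((k:ℝ)+2) := fun k => by positivity
  have GU := myGL 2 _ hu _ hCU hsumU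
  have GV := myGL 3 _ hv _ hCV hsumV
  have key : ∀ t : ℕ, (((t:ℝ)+1)*((t:ℝ)+2)*((t:ℝ)+3)/6) * A (t+2)
      = (((t:ℝ)+1)*((t:ℝ)+2)*((t:ℝ)+3)/6) * F (t+2)
        - (((t:ℝ)+1)*((t:ℝ)+2)*((t:ℝ)+3)/6*((t:ℝ)+2)) * F (t+3) := by
    intro t
    have hA : A (t+2) = F (t+2) - (((t+2:ℕ)):ℝ) * F (t+3) := by
      show F (t+2) - (((t+2:ℕ)):ℝ) * F (t+2+1) = _
      rw [show t+2+1 = t+3 by omega]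
    rw [hA]
    push_cast
    ring
  constructor
  · exact (GU.1.sub GV.1).congr fun t => (key t).symm
  · rw [tsum_congr key, Summable.tsum_sub GU.1 GV.1, GU.2, GV.2, valueU, valueV]
    ring

theorem stmt_2 :
    ∑' n₁ : ℕ+, ∑' n₂ : ℕ+, ∑' n₃ : ℕ+,
      ((n₁ : ℝ) * n₂ * n₃) / (Nat.factorial (n₁ + n₂ + n₃ : ℕ)) = (31 / 120) * Real.exp 1 := by
  have coeS : ∀ k : ℕ, ((Equiv.pnatEquivNat.symm k : ℕ+) : ℕ) = k + 1 := fun k => rfl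
  have inner : ∀ n₁ n₂ : ℕ+,
      (∑' n₃ : ℕ+, ((n₁ : ℝ) * n₂ * n₃) / (Nat.factorial (n₁ + n₂ + n₃ : ℕ)))
        = ((n₁:ℕ):ℝ) * ((n₂:ℕ):ℝ) * A ((n₁:ℕ) + (n₂:ℕ)) := by
    intro n₁ n₂
    rw [← Equiv.tsum_eq Equiv.pnatEquivNat.symm]
    have hpt : ∀ k : ℕ,
        ((n₁ : ℝ) * n₂ * ((Equiv.pnatEquivNat.symm k : ℕ+) : ℕ)) /
            (Nat.factorial ((n₁:ℕ) + (n₂:ℕ) + ((Equiv.pnatEquivNat.symm k : ℕ+) : ℕ)))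
          = (((n₁:ℕ):ℝ) * ((n₂:ℕ):ℝ)) *
            (((k:ℝ)+1) / (((((n₁:ℕ) + (n₂:ℕ)) + k + 1).factorial : ℝ))) := by
      intro k
      rw [coeS k, show (n₁:ℕ) + (n₂:ℕ) + (k+1) = ((n₁:ℕ) + (n₂:ℕ)) + k + 1 by omega]
      push_cast
      ring
    rw [tsum_congr hpt, tsum_mul_left, tsumA]
  have middle : ∀ n₁ : ℕ+,
      (∑' n₂ : ℕ+, ((n₁:ℕ):ℝ) * ((n₂:ℕ):ℝ) * A ((n₁:ℕ) + (n₂:ℕ)))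
        = ((n₁:ℕ):ℝ) * ∑' k : ℕ, ((k:ℝ)+1) * A ((n₁:ℕ) + k + 1) := by
    intro n₁
    rw [← Equiv.tsum_eq Equiv.pnatEquivNat.symm]
    have hpt : ∀ k : ℕ,
        ((n₁:ℕ):ℝ) * (((Equiv.pnatEquivNat.symm k : ℕ+) : ℕ):ℝ) *
            A ((n₁:ℕ) + ((Equiv.pnatEquivNat.symm k : ℕ+) : ℕ))
          = ((n₁:ℕ):ℝ) * (((k:ℝ)+1) * A ((n₁:ℕ) + k + 1)) := by
      intro k
      rw [coeS k, show (n₁:ℕ) + (k+1) = (n₁:ℕ) + k + 1 by omega]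
      push_cast
      ring
    rw [tsum_congr hpt, tsum_mul_left]
  rw [tsum_congr (fun n₁ => tsum_congr (fun n₂ => inner n₁ n₂)),
      tsum_congr middle,
      ← Equiv.tsum_eq Equiv.pnatEquivNat.symm]
  have outer : ∀ j : ℕ,
      (((Equiv.pnatEquivNat.symm j : ℕ+) : ℕ):ℝ) *
          ∑' k : ℕ, ((k:ℝ)+1) * A (((Equiv.pnatEquivNat.symm j : ℕ+) : ℕ) + k + 1)
        = ∑' k : ℕ, (((j:ℝ)+1) * ((k:ℝ)+1)) * A ((j + k) + 2) := by
    intro j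
    rw [coeS j]
    have hin : ∀ k : ℕ, ((k:ℝ)+1) * A (j + 1 + k + 1) = ((k:ℝ)+1) * A ((j + k) + 2) := by
      intro k
      rw [show j + 1 + k + 1 = (j + k) + 2 by omega]
    rw [tsum_congr hin, ← tsum_mul_left]
    apply tsum_congr
    intro k
    push_cast
    ring
  rw [tsum_congr outer]
  have GPT := myGPair (fun t => A (t + 2)) (fun t => A_nonneg _) valueT.1
  have hiter := Summable.tsum_prod GPT.1
  have : (∑' (j : ℕ) (k : ℕ), (((j:ℝ)+1) * ((k:ℝ)+1)) * A ((j + k) + 2))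
      = ∑' p : ℕ × ℕ, ((p.1:ℝ)+1) * ((p.2:ℝ)+1) * A ((p.1 + p.2) + 2) := by
    rw [hiter]
  rw [this, GPT.2, valueT.2]
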